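/- Fix m ∈ M with support H = {j₁ < ⋯ < j_s}, vacancy numbers p_j = L - 2Σ_k min(j,k)m_k. For J ∈ J̄(m) = J_{j₁} × ⋯ × J_{j_s}, where J_j = {(J_i)_{i∈ℤ} : J_i ∈ ℤ, J_i ≤ J_{i+1}, J_{i+m_j} = J_i + p_j}, the composite slide σ_{j₁}^{m_{j₁}} ∘ ⋯ ∘ σ_{j_s}^{m_{j_s}} applied to J equals J + L (i.e. every entry is increased by L). -/

import Mathlib

/-- The vacancy number `p_j = L - 2 Σ_k min(j,k) m_k`. -/
def vacancy (L : ℕ) (m : ℕ →₀ ℕ) (j : ℕ) : ℤ :=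
  (L : ℤ) - 2 * ∑ k ∈ m.support, (min j k : ℤ) * (m k : ℤ)

/-- `J ∈ J̄(m)`: on each block `j ∈ H = supp(m)`, the sequence `(J_i)_{i∈ℤ}` is
weakly increasing and quasi-periodic: `J_{i+m_j} = J_i + p_j`. -/
def InJbar (L : ℕ) (m : ℕ →₀ ℕ) (J : ℕ → ℤ → ℤ) : Prop :=
  ∀ j ∈ m.support, (∀ i : ℤ, J j i ≤ J j (i + 1)) ∧
    ∀ i : ℤ, J j (i + (m j : ℤ)) = J j i + vacancy L m j

/-- The slide `σ_k`: `(σ_k J)^{(j)}_i = J^{(j)}_{i+δ_{j,k}} + 2 min(j,k)`. -/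
def slide (k : ℕ) (J : ℕ → ℤ → ℤ) : ℕ → ℤ → ℤ :=
  fun j i => J j (i + (if j = k then 1 else 0)) + 2 * (min j k : ℤ)

lemma slide_iter (k n : ℕ) (J : ℕ → ℤ → ℤ) (j : ℕ) (i : ℤ) :
    (slide k)^[n] J j i
      = J j (i + n * (if j = k then 1 else 0)) + 2 * n * (min j k : ℤ) := by
  induction n generalizing i with
  | zero => simp
  | succ n ih =>
    rw [Function.iterate_succ_apply']
    simp only [slide]
    rw [ih]
    push_cast
    split <;> ring_nf

lemma foldr_eval (m : ℕ →₀ ℕ) (l : List ℕ) (J : ℕ → ℤ → ℤ) (j : ℕ) (i : ℤ) :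
    (l.foldr (fun k F => (slide k)^[m k] ∘ F) id) J j i
      = J j (i + (l.count j : ℤ) * (m j : ℤ))
        + 2 * (l.map (fun (k : ℕ) => min (j:ℤ) (k:ℤ) * (m k : ℤ))).sum := by
  induction l generalizing i with
  | nil => simp
  | cons k t ih =>
    simp only [List.foldr_cons, Function.comp_apply, slide_iter, ih, List.map_cons,
      List.sum_cons, List.count_cons]
    by_cases h : j = k
    · subst h
      simp
      push_cast
      ring_nf
    · simp [h, Ne.symm h]
      ring

/-- The composite slide `σ_{j₁}^{m_{j₁}} ∘ ⋯ ∘ σ_{j_s}^{m_{j_s}}` applied to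
`J ∈ J̄(m)` equals `J + L` (every entry increased by `L`). -/
theorem stmt6 (L : ℕ) (hL : 0 < L) (m : ℕ →₀ ℕ) (h0 : m 0 = 0)
    (hm : 2 * ∑ j ∈ m.support, j * m j ≤ L)
    (J : ℕ → ℤ → ℤ) (hJ : InJbar L m J) :
    ∀ j ∈ m.support, ∀ i : ℤ,
      (((m.support.sort (· ≤ ·)).foldr (fun k F => (slide k)^[m k] ∘ F) id) J) j i
        = J j i + L := by
  intro j hj i
  rw [foldr_eval]
  have hc : (m.support.sort (· ≤ ·)).count j = 1 := by
    rw [List.count_eq_one_of_mem (m.support.sort_nodup _) (by simpa using hj)]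
  have hsum : ((m.support.sort (· ≤ ·)).map (fun (k : ℕ) => min (j:ℤ) (k:ℤ) * (m k : ℤ))).sum
      = ∑ k ∈ m.support, (min j k : ℤ) * (m k : ℤ) := by
    rw [← Finset.sum_map_toList]
    exact List.Perm.sum_eq (List.Perm.map _ (Finset.sort_perm_toList _ _))
  rw [hc, hsum]
  have := (hJ j hj).2 i
  simp only [Int.ofNat_one, one_mul] at *
  rw [this, vacancy]
  push_cast
  ring
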